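/- For j ∈ [0, i), we have nss[j] = i if and only if either (j = i-1 and S_j ≻ S_i) or (j has a last child j' in the pss-tree and nss[j'] = i). -/
import Mathlib


/-- Strict lexicographic order on strings over a totally ordered alphabet. -/
def Slt {α : Type*} [LinearOrder α] (u v : List α) : Prop := List.Lex (· < ·) u v

/-- `S` is null-terminated: its last character is strictly smaller than every other character. -/
def NullTerminated {α : Type*} [LinearOrder α] (S : List α) : Prop :=
  ∀ i, ∀ _h : i + 1 < S.length, S[S.length - 1]'(by omega) < S[i]'(by omega)

/-- `nss S i` : position of the next smaller suffix of `i` (with `S.drop S.length = ε`). -/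
noncomputable def nss {α : Type*} [LinearOrder α] (S : List α) (i : ℕ) : ℕ :=
  sInf { j | i < j ∧ j ≤ S.length ∧ Slt (S.drop j) (S.drop i) }

/-- `pss S i` : position of the previous smaller suffix of `i`, or `-1` if none exists. -/
noncomputable def pss {α : Type*} [LinearOrder α] (S : List α) (i : ℕ) : ℤ :=
  sSup (insert (-1) { j : ℤ | 0 ≤ j ∧ j < (i : ℤ) ∧ Slt (S.drop j.toNat) (S.drop i) })

/-- A non-empty string is a Lyndon word iff it is smaller than all of its proper suffixes. -/
def IsLyndon {α : Type*} [LinearOrder α] (w : List α) : Prop :=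
  w ≠ [] ∧ ∀ j, 0 < j → j < w.length → Slt w (w.drop j)

/-- `Ls S i` : the Lyndon prefix of the suffix `S.drop i`, which equals `S[i..nss[i])`. -/
noncomputable def Ls {α : Type*} [LinearOrder α] (S : List α) (i : ℕ) : List α :=
  (S.drop i).take (nss S i - i)

section Aux

variable {α : Type*} [LinearOrder α]

lemma slt_iff_lt {u v : List α} : Slt u v ↔ u < v := Iff.rfl

lemma drop_ne {S : List α} {a b : ℕ} (hab : a ≠ b) (ha : a ≤ S.length) (hb : b ≤ S.length) :
    S.drop a ≠ S.drop b := by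
  intro h
  have := congrArg List.length h
  simp only [List.length_drop] at this
  omega

lemma slt_resolve {S : List α} {a b : ℕ} (hab : a ≠ b) (ha : a ≤ S.length) (hb : b ≤ S.length)
    (h : ¬ Slt (S.drop a) (S.drop b)) : Slt (S.drop b) (S.drop a) := by
  rw [slt_iff_lt] at *
  exact (lt_or_gt_of_ne (drop_ne hab ha hb)).resolve_left h

lemma nss_spec {S : List α} {j : ℕ} (hj : j < S.length) :
    j < nss S j ∧ nss S j ≤ S.length ∧ Slt (S.drop (nss S j)) (S.drop j) := by
  have hne : { k | j < k ∧ k ≤ S.length ∧ Slt (S.drop k) (S.drop j) }.Nonempty := by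
    refine ⟨S.length, hj, le_rfl, ?_⟩
    rw [List.drop_length]
    have hne' : S.drop j ≠ [] := by
      intro h
      have := congrArg List.length h
      simp only [List.length_drop, List.length_nil] at this
      omega
    cases h : S.drop j with
    | nil => exact absurd h hne'
    | cons a l => exact List.Lex.nil
  exact Nat.sInf_mem hne

lemma nss_min {S : List α} {j k : ℕ} (hk1 : j < k) (hk2 : k < nss S j) (hk3 : k ≤ S.length) :
    ¬ Slt (S.drop k) (S.drop j) :=
  fun h => Nat.notMem_of_lt_sInf hk2 ⟨hk1, hk3, h⟩

lemma nss_eq {S : List α} {j i : ℕ} (hji : j < i) (hi : i ≤ S.length)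
    (hslt : Slt (S.drop i) (S.drop j))
    (hmin : ∀ k, j < k → k < i → ¬ Slt (S.drop k) (S.drop j)) : nss S j = i := by
  have hmem : i ∈ { k | j < k ∧ k ≤ S.length ∧ Slt (S.drop k) (S.drop j) } := ⟨hji, hi, hslt⟩
  refine le_antisymm (Nat.sInf_le hmem) (le_csInf ⟨i, hmem⟩ ?_)
  rintro k ⟨h1, h2, h3⟩
  by_contra h
  exact hmin k h1 (by omega) h3

lemma pss_eq {S : List α} {j j' : ℕ} (hjj : j < j')
    (h1 : Slt (S.drop j) (S.drop j'))
    (h2 : ∀ m, j < m → m < j' → ¬ Slt (S.drop m) (S.drop j')) : pss S j' = (j : ℤ) := by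
  unfold pss
  apply IsGreatest.csSup_eq
  constructor
  · refine Set.mem_insert_iff.mpr (Or.inr ⟨Int.natCast_nonneg j, ?_, ?_⟩)
    · exact_mod_cast hjj
    · simpa using h1
  · rintro x hx
    rcases Set.mem_insert_iff.mp hx with rfl | ⟨hx0, hx1, hx2⟩
    · omega
    · by_contra h
      push_neg at h
      lift x to ℕ using hx0 with m
      refine h2 m (by exact_mod_cast h) (by exact_mod_cast hx1) (by simpa using hx2)

lemma pss_spec {S : List α} {j j' : ℕ} (h : pss S j' = (j : ℤ)) :
    j < j' ∧ Slt (S.drop j) (S.drop j') ∧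
      ∀ m, j < m → m < j' → ¬ Slt (S.drop m) (S.drop j') := by
  set Z := { m : ℤ | 0 ≤ m ∧ m < (j' : ℤ) ∧ Slt (S.drop m.toNat) (S.drop j') } with hZ
  have hbdd : BddAbove (insert (-1) Z) := by
    refine ⟨(j' : ℤ), ?_⟩
    rintro x hx
    rcases Set.mem_insert_iff.mp hx with rfl | ⟨_, hx1, _⟩
    · omega
    · exact hx1.le
  have hsup : sSup (insert (-1) Z) = (j : ℤ) := h
  have hmem : sSup (insert (-1) Z) ∈ insert (-1) Z :=
    Int.csSup_mem ⟨-1, Set.mem_insert _ _⟩ hbdd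
  rw [hsup] at hmem
  rcases Set.mem_insert_iff.mp hmem with h' | ⟨_, h1, h2⟩
  · omega
  · refine ⟨by exact_mod_cast h1, by simpa using h2, ?_⟩
    intro m hm1 hm2 hm3
    have : (m : ℤ) ∈ insert (-1) Z := by
      refine Set.mem_insert_iff.mpr (Or.inr ⟨Int.natCast_nonneg m, ?_, ?_⟩)
      · exact_mod_cast hm2
      · simpa using hm3
    have := le_csSup hbdd this
    rw [hsup] at this
    exact absurd (show (m : ℤ) ≤ (j : ℤ) from this) (by exact_mod_cast not_le.mpr hm1)

lemma stmt8_fwd (S : List α) {i j : ℕ} (hji : j < i) (hi : i ≤ S.length) (h : nss S j = i) :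
    (j = i - 1 ∧ Slt (S.drop i) (S.drop j)) ∨
      (∃ j', j' < S.length ∧ pss S j' = (j : ℤ) ∧
        (∀ k, k < S.length → j' < k → pss S k ≠ (j : ℤ)) ∧ nss S j' = i) := by
  have hj : j < S.length := lt_of_lt_of_le hji hi
  obtain ⟨-, -, hslt⟩ := nss_spec (S := S) hj
  rw [h] at hslt
  have hgt : ∀ k, j < k → k < i → Slt (S.drop j) (S.drop k) := by
    intro k hk1 hk2
    exact slt_resolve (by omega) (by omega) hj.le
      (nss_min hk1 (show k < nss S j by rw [h]; exact hk2) (by omega))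
  by_cases hcase : i = j + 1
  · exact Or.inl ⟨by omega, hslt⟩
  · right
    have hne : (Finset.Ioo j i).Nonempty := ⟨j + 1, by rw [Finset.mem_Ioo]; omega⟩
    obtain ⟨j', hj'mem, hj'min⟩ := Finset.exists_min_image (Finset.Ioo j i) (fun m => S.drop m) hne
    rw [Finset.mem_Ioo] at hj'mem
    obtain ⟨hj'1, hj'2⟩ := hj'mem
    have hj'len : j' < S.length := by omega
    have hmin' : ∀ m, j < m → m < i → m ≠ j' → Slt (S.drop j') (S.drop m) := by
      intro m hm1 hm2 hm3
      have hle : S.drop j' ≤ S.drop m := hj'min m (by rw [Finset.mem_Ioo]; omega)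
      rw [slt_iff_lt]
      exact lt_of_le_of_ne hle (drop_ne (Ne.symm hm3) hj'len.le (by omega))
    have hjj' : Slt (S.drop j) (S.drop j') := hgt j' hj'1 hj'2
    refine ⟨j', hj'len, ?_, ?_, ?_⟩
    · refine pss_eq hj'1 hjj' ?_
      intro m hm1 hm2 hcon
      exact absurd hcon (by rw [slt_iff_lt] at *; exact lt_asymm (hmin' m hm1 (by omega) (by omega)))
    · intro k hk hk' hpk
      obtain ⟨hk1, hk2, hk3⟩ := pss_spec hpk
      rcases lt_trichotomy k i with hki | hki | hki
      · exact hk3 j' hj'1 hk' (hmin' k hk1 hki (by omega))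
      · subst hki
        rw [slt_iff_lt] at *
        exact lt_asymm hslt hk2
      · refine hk3 i hji hki ?_
        rw [slt_iff_lt] at *
        exact lt_trans hslt hk2
    · refine nss_eq hj'2 hi ?_ ?_
      · rw [slt_iff_lt] at *
        exact lt_trans hslt hjj'
      · intro k hk1 hk2 hcon
        exact absurd hcon
          (by rw [slt_iff_lt] at *; exact lt_asymm (hmin' k (by omega) hk2 (by omega)))

end Aux

/-- for `j < i`, `nss[j] = i` iff either `j = i - 1` and `S_j ≻ S_i`, or
`j` has a last child `j'` in the `pss`-tree with `nss[j'] = i`. -/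
theorem stmt8 {α : Type*} [LinearOrder α] (S : List α) (hS : NullTerminated S)
    {i j : ℕ} (hji : j < i) (hi : i ≤ S.length) :
    nss S j = i ↔
      (j = i - 1 ∧ Slt (S.drop i) (S.drop j)) ∨
      (∃ j', j' < S.length ∧ pss S j' = (j : ℤ) ∧
        (∀ k, k < S.length → j' < k → pss S k ≠ (j : ℤ)) ∧ nss S j' = i) := by
  constructor
  · exact stmt8_fwd S hji hi
  · rintro (⟨hj1, hslt⟩ | ⟨j', hj'len, hpss, hmax, hnss⟩)
    · refine nss_eq hji hi hslt ?_
      intro k hk1 hk2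
      exact absurd hk1 (by omega)
    · obtain ⟨hjj', hsltjj', hmid⟩ := pss_spec hpss
      have hj : j < S.length := lt_of_lt_of_le hji hi
      obtain ⟨hn1, hn2, hn3⟩ := nss_spec (S := S) hj
      have hnj1 : j + 1 < nss S j := by
        by_contra hcon
        push_neg at hcon
        have hn_eq : nss S j = j + 1 := by omega
        rcases eq_or_lt_of_le (show nss S j ≤ j' by omega) with heq | hlt
        · rw [← heq] at hsltjj'
          rw [slt_iff_lt] at *
          exact lt_asymm hn3 hsltjj'
        · have h4 : Slt (S.drop j') (S.drop (nss S j)) :=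
            slt_resolve (by omega) hn2 hj'len.le (hmid (nss S j) hn1 hlt)
          rw [slt_iff_lt] at *
          exact lt_irrefl _ (lt_trans (lt_trans hsltjj' h4) hn3)
      rcases stmt8_fwd S hn1 hn2 rfl with ⟨h1, -⟩ | ⟨j'', hj''len, hpss'', hmax'', hnss''⟩
      · omega
      · rcases lt_trichotomy j' j'' with hlt | heq | hlt
        · exact absurd hpss'' (hmax j'' hj''len hlt)
        · rw [← hnss, heq, hnss'']
        · exact absurd hpss (hmax'' j' hj'len hlt)
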